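/- In the setting of the forward-chaining chain S = W_0 ⊊ W_1 ⊊ ⋯ ⊊ W_t ⊇ S' associated with a round-minimal L-optimal CNF Φ for price_L(S,S'), with B_i a smallest member of 𝓑 contained in W_i for i = 0,…,t−1 and B_t := S', the pure Horn CNF Φ^(1) := ⋀_{i=0}^{t−1} B_i → (B_{i+1} \ (S ∪ ⋃_{j=1}^{i} B_j)) satisfies |Φ^(1)|_L = |Φ|_L = price_L(S,S'). -/

import Mathlib

open Finset

variable {V : Type*} [Fintype V] [DecidableEq V]

/-- A pure Horn CNF is a finite set of clauses `(B, v)`: body `B`, head `v`,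
with `B` nonempty and `v ∉ B`. -/
def PureHorn (Φ : Finset (Finset V × V)) : Prop :=
  ∀ c ∈ Φ, c.1.Nonempty ∧ c.2 ∉ c.1

/-- A set `W` is closed under the clauses of `Φ`. -/
def HornClosed (Φ : Finset (Finset V × V)) (W : Set V) : Prop :=
  ∀ c ∈ Φ, ↑c.1 ⊆ W → c.2 ∈ W

/-- Forward-chaining closure `F_Φ(Z)`: the smallest set containing `Z`
that is closed under the clauses of `Φ`. -/
def hornClosure (Φ : Finset (Finset V × V)) (Z : Set V) : Set V :=
  ⋂₀ {W : Set V | Z ⊆ W ∧ HornClosed Φ W}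

/-- `Ψ_𝓑 = ⋀_{B ∈ 𝓑} B → (V \ B)`. -/
def keyCNF (𝓑 : Finset (Finset V)) : Finset (Finset V × V) :=
  𝓑.biUnion fun B => (Finset.univ \ B).image fun v => (B, v)

/-- `Φ` represents the key Horn function `h_𝓑`, i.e. `Φ` is a pure Horn CNF
equivalent to `Ψ_𝓑`. -/
def Represents (𝓑 : Finset (Finset V)) (Φ : Finset (Finset V × V)) : Prop :=
  PureHorn Φ ∧ ∀ Z : Finset V, hornClosure Φ ↑Z = hornClosure (keyCNF 𝓑) ↑Z

/-- (B) number of (distinct) bodies. -/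
def sizeB (Φ : Finset (Finset V × V)) : ℕ := (Φ.image Prod.fst).card
/-- (BA) body area `Σ_i |B_i|` over the distinct bodies. -/
def sizeBA (Φ : Finset (Finset V × V)) : ℕ := ∑ B ∈ Φ.image Prod.fst, B.card
/-- (C) number of clauses `Σ_i |H_i|`. -/
def sizeC (Φ : Finset (Finset V × V)) : ℕ := Φ.card
/-- (TA) total area `Σ_i (|B_i| + |H_i|)`. -/
def sizeTA (Φ : Finset (Finset V × V)) : ℕ := sizeBA Φ + sizeC Φ
/-- (BC) bodies plus clauses `Σ_i (|H_i| + 1)`. -/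
def sizeBC (Φ : Finset (Finset V × V)) : ℕ := sizeB Φ + sizeC Φ
/-- (L) number of literals `Σ_i (|B_i| + 1)·|H_i|`. -/
def sizeL (Φ : Finset (Finset V × V)) : ℕ := ∑ c ∈ Φ, (c.1.card + 1)

/-- `μ` is one of the six size measures. -/
def IsMeasure (μ : Finset (Finset V × V) → ℕ) : Prop :=
  μ = sizeB ∨ μ = sizeBA ∨ μ = sizeTA ∨ μ = sizeC ∨ μ = sizeBC ∨ μ = sizeL

/-- `OPT_μ(𝓑)`: minimum `μ`-size of a CNF representing `h_𝓑`. -/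
noncomputable def OPT (μ : Finset (Finset V × V) → ℕ) (𝓑 : Finset (Finset V)) : ℕ :=
  sInf {s : ℕ | ∃ Φ : Finset (Finset V × V), Represents 𝓑 Φ ∧ μ Φ = s}

/-- `price_μ(S,T)`: minimum `μ`-size of a pure Horn CNF with bodies in `𝓑`
whose forward chaining from `S` reaches all of `T`. -/
noncomputable def price (μ : Finset (Finset V × V) → ℕ) (𝓑 : Finset (Finset V))
    (S T : Finset V) : ℕ :=
  sInf {s : ℕ | ∃ Φ : Finset (Finset V × V),
    PureHorn Φ ∧ (∀ c ∈ Φ, c.1 ∈ 𝓑) ∧ ↑T ⊆ hornClosure Φ ↑S ∧ μ Φ = s}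

/-- One round of forward chaining. -/
def fcStep (Φ : Finset (Finset V × V)) (W : Finset V) : Finset V :=
  W ∪ (Φ.filter fun c => c.1 ⊆ W).image Prod.snd

/-- The forward-chaining chain `W_0 = S`, `W_{i+1} = fcStep Φ W_i`. -/
def fcChain (Φ : Finset (Finset V × V)) (S : Finset V) : ℕ → Finset V
  | 0 => S
  | i + 1 => fcStep Φ (fcChain Φ S i)

/-- The CNF `⋀_{i=0}^{t-1} Bs i → (Bs (i+1) \ (S ∪ ⋃_{j=1}^{i} Bs j))`. -/
def chainCNF (S : Finset V) (Bs : ℕ → Finset V) (t : ℕ) :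
    Finset (Finset V × V) :=
  (Finset.range t).biUnion fun i =>
    (Bs (i + 1) \ (S ∪ (Finset.Icc 1 i).biUnion Bs)).image fun v => (Bs i, v)


section AuxStmt12

variable {V : Type*} [Fintype V] [DecidableEq V]

lemma aux_subset_hornClosure (Φ : Finset (Finset V × V)) (Z : Set V) :
    Z ⊆ hornClosure Φ Z := fun v hv => Set.mem_sInter.2 fun _ hW => hW.1 hv

lemma aux_hornClosed_hornClosure (Φ : Finset (Finset V × V)) (Z : Set V) :
    HornClosed Φ (hornClosure Φ Z) := by
  intro c hc hsub
  refine Set.mem_sInter.2 fun W hW => ?_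
  exact hW.2 c hc fun x hx => Set.mem_sInter.1 (hsub hx) W hW

lemma aux_hornClosure_subset {Φ : Finset (Finset V × V)} {Z W : Set V}
    (h1 : Z ⊆ W) (h2 : HornClosed Φ W) : hornClosure Φ Z ⊆ W :=
  Set.sInter_subset_of_mem ⟨h1, h2⟩

lemma aux_fcChain_subset_succ (Φ : Finset (Finset V × V)) (S : Finset V) (i : ℕ) :
    fcChain Φ S i ⊆ fcChain Φ S (i + 1) := by
  show fcChain Φ S i ⊆ fcStep Φ (fcChain Φ S i)
  exact Finset.subset_union_left

lemma aux_fcChain_mono (Φ : Finset (Finset V × V)) (S : Finset V) {i j : ℕ} (h : i ≤ j) :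
    fcChain Φ S i ⊆ fcChain Φ S j := by
  induction j, h using Nat.le_induction with
  | base => exact subset_rfl
  | succ j hij ih => exact ih.trans (aux_fcChain_subset_succ Φ S j)

/-- If `v` appears by round `i+1` and is not in `S`, some clause with body inside
round `i` derives it. -/
lemma aux_derive (Φ : Finset (Finset V × V)) (S : Finset V) :
    ∀ i : ℕ, ∀ v ∈ fcChain Φ S (i + 1), v ∉ S →
      ∃ d ∈ Φ, d.2 = v ∧ d.1 ⊆ fcChain Φ S i := by
  intro i
  induction i with
  | zero =>
    intro v hv hvS
    change v ∈ fcStep Φ S at hv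
    simp only [fcChain, fcStep, mem_union, mem_image, mem_filter] at hv
    rcases hv with h | ⟨d, ⟨hd, hds⟩, hdv⟩
    · exact absurd h hvS
    · exact ⟨d, hd, hdv, hds⟩
  | succ i ih =>
    intro v hv hvS
    have hv' : v ∈ fcStep Φ (fcChain Φ S (i + 1)) := hv
    simp only [fcStep, mem_union, mem_image, mem_filter] at hv'
    rcases hv' with h | ⟨d, ⟨hd, hds⟩, hdv⟩
    · obtain ⟨d, hd, h2, h3⟩ := ih v h hvS
      exact ⟨d, hd, h2, h3.trans (aux_fcChain_subset_succ Φ S i)⟩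
    · exact ⟨d, hd, hdv, hds⟩

lemma aux_mem_chainCNF {S : Finset V} {Bs : ℕ → Finset V} {t : ℕ} {c : Finset V × V} :
    c ∈ chainCNF S Bs t ↔ ∃ i < t, ∃ v ∈ Bs (i + 1) \ (S ∪ (Finset.Icc 1 i).biUnion Bs),
      c = (Bs i, v) := by
  simp only [chainCNF, mem_biUnion, mem_image, mem_range]
  constructor
  · rintro ⟨i, hi, v, hv, rfl⟩; exact ⟨i, hi, v, hv, rfl⟩
  · rintro ⟨i, hi, v, hv, rfl⟩; exact ⟨i, hi, v, hv, rfl⟩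

end AuxStmt12


noncomputable def auxPick {V : Type*} [DecidableEq V] (Φ : Finset (Finset V × V))
    (c : Finset V × V) : Finset V × V :=
  if h : ∃ d, d ∈ Φ ∧ d.2 = c.2 ∧ c.1.card ≤ d.1.card then h.choose else c

lemma auxPick_spec {V : Type*} [DecidableEq V] {Φ : Finset (Finset V × V)}
    {c : Finset V × V} (h : ∃ d, d ∈ Φ ∧ d.2 = c.2 ∧ c.1.card ≤ d.1.card) :
    auxPick Φ c ∈ Φ ∧ (auxPick Φ c).2 = c.2 ∧ c.1.card ≤ (auxPick Φ c).1.card := by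
  rw [auxPick, dif_pos h]
  exact h.choose_spec

set_option maxHeartbeats 1000000

/-- Proposition 3: the CNF
`Φ^(1) = ⋀_{i=0}^{t-1} B_i → (B_{i+1} \ (S ∪ ⋃_{j=1}^{i} B_j))`
satisfies `|Φ^(1)|_L = |Φ|_L = price_L(S,S')`. -/
theorem stmt12 {V : Type*} [Fintype V] [DecidableEq V]
    (𝓑 : Finset (Finset V))
    (hne : ∀ B ∈ 𝓑, B.Nonempty) (hproper : ∀ B ∈ 𝓑, B ≠ Finset.univ)
    (hsperner : ∀ B ∈ 𝓑, ∀ B' ∈ 𝓑, B ⊆ B' → B = B')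
    (hcover : ∀ v : V, ∃ B ∈ 𝓑, v ∈ B)
    (hinter : ∀ v : V, ∃ B ∈ 𝓑, v ∉ B)
    (S S' : Finset V) (hS : ∃ B ∈ 𝓑, B ⊆ S)
    (Φ : Finset (Finset V × V)) (t : ℕ)
    (hPH : PureHorn Φ) (hbodies : ∀ c ∈ Φ, c.1 ∈ 𝓑)
    (hSreach : ↑S' ⊆ hornClosure Φ ↑S)
    (hopt : sizeL Φ = price sizeL 𝓑 S S')
    (hstab : fcChain Φ S t = fcChain Φ S (t + 1))
    (htleast : ∀ j < t, fcChain Φ S j ≠ fcChain Φ S (j + 1))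
    (hround : ∀ (Φ' : Finset (Finset V × V)) (t' : ℕ), PureHorn Φ' →
      (∀ c ∈ Φ', c.1 ∈ 𝓑) → ↑S' ⊆ hornClosure Φ' ↑S →
      sizeL Φ' = price sizeL 𝓑 S S' →
      fcChain Φ' S t' = fcChain Φ' S (t' + 1) → t ≤ t')
    (Bseq : ℕ → Finset V)
    (hBseq : ∀ i < t, Bseq i ∈ 𝓑 ∧ Bseq i ⊆ fcChain Φ S i ∧
      ∀ B' ∈ 𝓑, B' ⊆ fcChain Φ S i → (Bseq i).card ≤ B'.card)
    (hBt : Bseq t = S')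
    : sizeL (chainCNF S Bseq t) = sizeL Φ ∧ sizeL Φ = price sizeL 𝓑 S S' := by

  classical
  refine ⟨?_, hopt⟩
  -- Notation
  set W : ℕ → Finset V := fcChain Φ S with hW
  set Hds : ℕ → Finset V := fun i => Bseq (i + 1) \ (S ∪ (Finset.Icc 1 i).biUnion Bseq)
    with hHds
  set Φ₁ : Finset (Finset V × V) := chainCNF S Bseq t with hΦ₁
  have hmemΦ₁ : ∀ {c : Finset V × V}, c ∈ Φ₁ ↔
      ∃ i < t, ∃ v ∈ Hds i, c = (Bseq i, v) := fun {c} => aux_mem_chainCNF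
  -- W t is closed, so the closure (hence S') sits inside W t
  have hWtclosed : HornClosed Φ ↑(W t) := by
    intro c hc hsub
    have h1 : c.1 ⊆ W t := fun x hx => by exact_mod_cast hsub hx
    have : c.2 ∈ fcStep Φ (W t) := by
      simp only [fcStep, mem_union, mem_image, mem_filter]
      exact Or.inr ⟨c, ⟨hc, h1⟩, rfl⟩
    rwa [show fcStep Φ (W t) = W t from hstab.symm] at this
  have hSWt : (↑S : Set V) ⊆ ↑(W t) := by
    exact_mod_cast aux_fcChain_mono Φ S (Nat.zero_le t)
  have hS'Wt : S' ⊆ W t := by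
    have := hSreach.trans (aux_hornClosure_subset hSWt hWtclosed)
    exact_mod_cast this
  have hBsub : ∀ i ≤ t, Bseq i ⊆ W i := by
    intro i hi
    rcases lt_or_eq_of_le hi with h | h
    · exact (hBseq i h).2.1
    · rw [h, hBt]; exact hS'Wt
  -- heads are not in S
  have hHdsS : ∀ i, ∀ v ∈ Hds i, v ∉ S := by
    intro i v hv hvS
    exact (mem_sdiff.1 hv).2 (mem_union_left _ hvS)
  -- heads are disjoint across rounds
  have hHdsdisj : ∀ i i' v, i' < i → v ∈ Hds i → v ∈ Hds i' → False := by
    intro i i' v hlt hvi hvi'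
    have hv1 : v ∈ Bseq (i' + 1) := (mem_sdiff.1 hvi').1
    have : v ∈ (Finset.Icc 1 i).biUnion Bseq :=
      mem_biUnion.2 ⟨i' + 1, by simp [Nat.succ_le_of_lt hlt], hv1⟩
    exact (mem_sdiff.1 hvi).2 (mem_union_right _ this)
  have hHdsuniq : ∀ i i' v, v ∈ Hds i → v ∈ Hds i' → i = i' := by
    intro i i' v hvi hvi'
    rcases lt_trichotomy i i' with h | h | h
    · exact absurd (hHdsdisj i' i v h hvi' hvi) not_false
    · exact h
    · exact absurd (hHdsdisj i i' v h hvi hvi') not_false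
  -- Part 1: Φ₁ is a legitimate competitor, so price ≤ sizeL Φ₁, i.e. sizeL Φ ≤ sizeL Φ₁.
  have hPH₁ : PureHorn Φ₁ := by
    intro c hc
    obtain ⟨i, hi, v, hv, rfl⟩ := hmemΦ₁.1 hc
    refine ⟨hne _ (hBseq i hi).1, ?_⟩
    rcases Nat.eq_zero_or_pos i with h0 | h0
    · subst h0
      intro hvB
      exact hHdsS 0 v hv ((hBseq 0 hi).2.1 hvB)
    · intro hvB
      have : v ∈ (Finset.Icc 1 i).biUnion Bseq :=
        mem_biUnion.2 ⟨i, Finset.mem_Icc.2 ⟨h0, le_rfl⟩, hvB⟩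
      exact (mem_sdiff.1 hv).2 (mem_union_right _ this)
  have hbod₁ : ∀ c ∈ Φ₁, c.1 ∈ 𝓑 := by
    intro c hc
    obtain ⟨i, hi, v, hv, rfl⟩ := hmemΦ₁.1 hc
    exact (hBseq i hi).1
  have hreach₁ : (↑S' : Set V) ⊆ hornClosure Φ₁ ↑S := by
    set C : Set V := hornClosure Φ₁ ↑S with hC
    have hSC : (↑S : Set V) ⊆ C := aux_subset_hornClosure Φ₁ ↑S
    have hCclosed : HornClosed Φ₁ C := aux_hornClosed_hornClosure Φ₁ ↑S
    have key : ∀ i, i ≤ t → (↑(Bseq i) : Set V) ⊆ C := by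
      intro i
      induction i using Nat.strong_induction_on with
      | _ i ih =>
        intro hit
        match i with
        | 0 =>
          rcases Nat.eq_zero_or_pos t with ht0 | ht0
          · -- t = 0 : S is already closed under Φ, so S' ⊆ S
            have hSclosed : HornClosed Φ ↑S := by
              have := hWtclosed
              rwa [hW, ht0] at this
            have : (↑S' : Set V) ⊆ ↑S :=
              hSreach.trans (aux_hornClosure_subset subset_rfl hSclosed)
            have hB0 : Bseq 0 = S' := by rw [← ht0]; exact hBt
            rw [hB0]
            exact this.trans hSC
          · exact (fun x hx => hSC (by exact_mod_cast (hBseq 0 ht0).2.1 (by exact_mod_cast hx)))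
        | (k + 1) =>
          intro v hv
          have hvF : v ∈ Bseq (k + 1) := by exact_mod_cast hv
          by_cases hcase : v ∈ S ∪ (Finset.Icc 1 k).biUnion Bseq
          · rcases mem_union.1 hcase with h | h
            · exact hSC (by exact_mod_cast h)
            · obtain ⟨j, hj, hvj⟩ := mem_biUnion.1 h
              have hj' : j ≤ k := (Finset.mem_Icc.1 hj).2
              exact ih j (Nat.lt_succ_of_le hj') (hj'.trans (Nat.le_of_succ_le hit))
                (by exact_mod_cast hvj)
          · have hvH : v ∈ Hds k := mem_sdiff.2 ⟨hvF, hcase⟩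
            have hclause : ((Bseq k, v) : Finset V × V) ∈ Φ₁ :=
              hmemΦ₁.2 ⟨k, Nat.lt_of_succ_le hit, v, hvH, rfl⟩
            exact hCclosed _ hclause
              (ih k (Nat.lt_succ_self k) (Nat.le_of_succ_le hit))
    have := key t le_rfl
    rwa [hBt] at this
  have hprice_le : price sizeL 𝓑 S S' ≤ sizeL Φ₁ :=
    Nat.sInf_le ⟨Φ₁, hPH₁, hbod₁, hreach₁, rfl⟩
  have h1 : sizeL Φ ≤ sizeL Φ₁ := hopt ▸ hprice_le
  -- Part 2: sizeL Φ₁ ≤ sizeL Φ via an injection into Φ with bodies at least as large.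
  have hex : ∀ c ∈ Φ₁, ∃ d, d ∈ Φ ∧ d.2 = c.2 ∧ c.1.card ≤ d.1.card := by
    intro c hc
    obtain ⟨i, hi, v, hv, rfl⟩ := hmemΦ₁.1 hc
    have hvW : v ∈ W (i + 1) := hBsub (i + 1) (Nat.succ_le_of_lt hi) (mem_sdiff.1 hv).1
    obtain ⟨d, hd, hd2, hd1⟩ := aux_derive Φ S i v hvW (hHdsS i v hv)
    exact ⟨d, hd, hd2, (hBseq i hi).2.2 d.1 (hbodies d hd) hd1⟩
  set f : Finset V × V → Finset V × V := auxPick Φ with hfdef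
  have hf : ∀ c ∈ Φ₁, f c ∈ Φ ∧ (f c).2 = c.2 ∧ c.1.card ≤ (f c).1.card := by
    intro c hc
    exact auxPick_spec (hex c hc)
  have hfinj : ∀ c ∈ Φ₁, ∀ c' ∈ Φ₁, f c = f c' → c = c' := by
    intro c hc c' hc' hfe
    have h2 : c.2 = c'.2 := by
      rw [← (hf c hc).2.1, ← (hf c' hc').2.1, hfe]
    obtain ⟨i, hi, v, hv, rfl⟩ := hmemΦ₁.1 hc
    obtain ⟨i', hi', v', hv', rfl⟩ := hmemΦ₁.1 hc'
    simp only at h2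
    subst h2
    have : i = i' := hHdsuniq i i' v hv hv'
    subst this
    rfl
  have h2 : sizeL Φ₁ ≤ sizeL Φ := by
    have step1 : sizeL Φ₁ ≤ ∑ c ∈ Φ₁, ((f c).1.card + 1) := by
      refine Finset.sum_le_sum fun c hc => ?_
      exact Nat.add_le_add_right (hf c hc).2.2 1
    have step2 : ∑ c ∈ Φ₁, ((f c).1.card + 1) = ∑ d ∈ Φ₁.image f, (d.1.card + 1) :=
      (Finset.sum_image (f := fun d : Finset V × V => d.1.card + 1) hfinj).symm
    have step3 : ∑ d ∈ Φ₁.image f, (d.1.card + 1) ≤ sizeL Φ := by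
      refine Finset.sum_le_sum_of_subset ?_
      intro d hd
      obtain ⟨c, hc, rfl⟩ := Finset.mem_image.1 hd
      exact (hf c hc).1
    calc sizeL Φ₁ ≤ ∑ c ∈ Φ₁, ((f c).1.card + 1) := step1
      _ = ∑ d ∈ Φ₁.image f, (d.1.card + 1) := step2
      _ ≤ sizeL Φ := step3
  exact le_antisymm h2 h1
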